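/- arXiv:2205.14979 — 4 statements merged into one kernel-verified Lean document; each statement's English description precedes it below -/
import Mathlib

section
/- The 1-form ϖ = A0 ds0 + A1 ds1 + A2 ds2, where A_i = (1 + 36 s_i^3 - 216 (s_j + s_k) s_i^2 - 108 (s_j - s_k)^2 s_i)/(24 s_i) for {i, j, k} = {0, 1, 2}, is closed on (ℂ \ {0})^3, i.e. ∂A_i/∂s_j = ∂A_j/∂s_i for all i ≠ j. -/
/-- Derivative of the simplified form of each `A_i` in one of the other variables. -/
lemma aux_deriv (a b c y : ℂ) :
    deriv (fun t : ℂ => a - 9 * b * (t + c) - 9 / 2 * (t - c) ^ 2) y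
      = -(9 * b) - 9 * (y - c) := by
  have h1 : HasDerivAt (fun t : ℂ => 9 * b * (t + c)) (9 * b * 1) y :=
    ((hasDerivAt_id y).add_const c).const_mul (9 * b)
  have h2 : HasDerivAt (fun t : ℂ => 9 / 2 * (t - c) ^ 2)
      (9 / 2 * (2 * (y - c) ^ 1 * 1)) y :=
    (((hasDerivAt_id y).sub_const c).pow 2).const_mul (9 / 2)
  have h : HasDerivAt (fun t : ℂ => a - 9 * b * (t + c) - 9 / 2 * (t - c) ^ 2)
      (0 - 9 * b * 1 - 9 / 2 * (2 * (y - c) ^ 1 * 1)) y :=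
    ((hasDerivAt_const y a).sub h1).sub h2
  rw [h.deriv]; ring

/-- The 1-form `ϖ = A0 ds0 + A1 ds1 + A2 ds2` is closed: mixed partials agree. -/
theorem stmt_7 (s0 s1 s2 : ℂ) (hs0 : s0 ≠ 0) (hs1 : s1 ≠ 0) (hs2 : s2 ≠ 0)
    (A0 A1 A2 : ℂ → ℂ → ℂ → ℂ)
    (hA0 : ∀ x y z : ℂ, A0 x y z
      = (1 + 36 * x ^ 3 - 216 * (y + z) * x ^ 2 - 108 * (y - z) ^ 2 * x) / (24 * x))
    (hA1 : ∀ x y z : ℂ, A1 x y z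
      = (1 + 36 * y ^ 3 - 216 * (x + z) * y ^ 2 - 108 * (x - z) ^ 2 * y) / (24 * y))
    (hA2 : ∀ x y z : ℂ, A2 x y z
      = (1 + 36 * z ^ 3 - 216 * (x + y) * z ^ 2 - 108 * (x - y) ^ 2 * z) / (24 * z)) :
    deriv (fun y => A0 s0 y s2) s1 = deriv (fun x => A1 x s1 s2) s0 ∧
    deriv (fun z => A0 s0 s1 z) s2 = deriv (fun x => A2 x s1 s2) s0 ∧
    deriv (fun z => A1 s0 s1 z) s2 = deriv (fun y => A2 s0 y s2) s1 := by
  have e0y : (fun y => A0 s0 y s2)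
      = fun t => (1 + 36 * s0 ^ 3) / (24 * s0) - 9 * s0 * (t + s2) - 9 / 2 * (t - s2) ^ 2 := by
    funext t; rw [hA0]; field_simp; ring
  have e0z : (fun z => A0 s0 s1 z)
      = fun t => (1 + 36 * s0 ^ 3) / (24 * s0) - 9 * s0 * (t + s1) - 9 / 2 * (t - s1) ^ 2 := by
    funext t; rw [hA0]; field_simp; ring
  have e1x : (fun x => A1 x s1 s2)
      = fun t => (1 + 36 * s1 ^ 3) / (24 * s1) - 9 * s1 * (t + s2) - 9 / 2 * (t - s2) ^ 2 := by
    funext t; rw [hA1]; field_simp; ring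
  have e1z : (fun z => A1 s0 s1 z)
      = fun t => (1 + 36 * s1 ^ 3) / (24 * s1) - 9 * s1 * (t + s0) - 9 / 2 * (t - s0) ^ 2 := by
    funext t; rw [hA1]; field_simp; ring
  have e2x : (fun x => A2 x s1 s2)
      = fun t => (1 + 36 * s2 ^ 3) / (24 * s2) - 9 * s2 * (t + s1) - 9 / 2 * (t - s1) ^ 2 := by
    funext t; rw [hA2]; field_simp; ring
  have e2y : (fun y => A2 s0 y s2)
      = fun t => (1 + 36 * s2 ^ 3) / (24 * s2) - 9 * s2 * (t + s0) - 9 / 2 * (t - s0) ^ 2 := by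
    funext t; rw [hA2]; field_simp; ring
  refine ⟨?_, ?_, ?_⟩
  · rw [e0y, e1x, aux_deriv, aux_deriv]; ring
  · rw [e0z, e2x, aux_deriv, aux_deriv]; ring
  · rw [e1z, e2y, aux_deriv, aux_deriv]; ring
end

section
/- With s_i and σ_j as above (t_i^2 = s_i^3, σ1 = -(s0 - s1 - 3 s2)/(2 s2), σ2 = (-3 s0 - s1 + s2)/(2 s2), σ3 = -s0/s2), the following hold: ∂σ1/∂t0 = σ3/(3 t0) and ∂σ2/∂t0 = σ3/t0. -/
open Filter

/-- Reduced Garnier equations: `∂σ1/∂t0 = σ3/(3 t0)` and `∂σ2/∂t0 = σ3/t0`. -/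
theorem stmt_9 (t0 t1 t2 : ℂ) (ht0 : t0 ≠ 0) (ht1 : t1 ≠ 0) (ht2 : t2 ≠ 0)
    (s0 s1 s2 : ℂ → ℂ)
    (hs0d : DifferentiableAt ℂ s0 t0) (hs1d : DifferentiableAt ℂ s1 t1)
    (hs2d : DifferentiableAt ℂ s2 t2)
    (hs0 : ∀ᶠ t in nhds t0, (s0 t) ^ 3 = t ^ 2)
    (hs1 : ∀ᶠ t in nhds t1, (s1 t) ^ 3 = t ^ 2)
    (hs2 : ∀ᶠ t in nhds t2, (s2 t) ^ 3 = t ^ 2)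
    (hn0 : s0 t0 ≠ 0) (hn1 : s1 t1 ≠ 0) (hn2 : s2 t2 ≠ 0)
    (σ1 σ2 σ3 : ℂ → ℂ)
    (hσ1 : ∀ t, σ1 t = -(s0 t - s1 t1 - 3 * s2 t2) / (2 * s2 t2))
    (hσ2 : ∀ t, σ2 t = (-3 * s0 t - s1 t1 + s2 t2) / (2 * s2 t2))
    (hσ3 : ∀ t, σ3 t = -(s0 t) / s2 t2) :
    deriv σ1 t0 = σ3 t0 / (3 * t0) ∧ deriv σ2 t0 = σ3 t0 / t0 := by
  set d := deriv s0 t0 with hd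
  have hcube : (s0 t0) ^ 3 = t0 ^ 2 := hs0.self_of_nhds
  have hn2' : s2 t2 ≠ 0 := hn2
  -- derivative relation: 3 s0(t0)^2 * d = 2 t0
  have h1 : HasDerivAt (fun t => (s0 t) ^ 3) (3 * s0 t0 ^ 2 * d) t0 := by
    refine (hs0d.hasDerivAt.pow 3).congr_deriv ?_
    norm_num [hd]
  have h2 : HasDerivAt (fun t : ℂ => t ^ 2) (2 * t0) t0 := by
    simpa using (hasDerivAt_pow 2 t0)
  have heq : deriv (fun t => (s0 t) ^ 3) t0 = deriv (fun t : ℂ => t ^ 2) t0 :=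
    Filter.EventuallyEq.deriv_eq hs0
  have hkey : 3 * s0 t0 ^ 2 * d = 2 * t0 := by
    rw [h1.deriv] at heq
    rw [heq, h2.deriv]
  have hd0 : d = 2 * t0 / (3 * s0 t0 ^ 2) := by
    field_simp
    linear_combination hkey
  -- σ1
  have hσ1d : HasDerivAt σ1 (-d / (2 * s2 t2)) t0 := by
    have : HasDerivAt (fun t => -(s0 t - s1 t1 - 3 * s2 t2) / (2 * s2 t2))
        (-d / (2 * s2 t2)) t0 :=
      (((hs0d.hasDerivAt.sub_const (s1 t1)).sub_const (3 * s2 t2)).neg).div_const _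
    exact this.congr_of_eventuallyEq (Filter.Eventually.of_forall fun t => hσ1 t)
  have hσ2d : HasDerivAt σ2 ((-3 * d) / (2 * s2 t2)) t0 := by
    have : HasDerivAt (fun t => (-3 * s0 t - s1 t1 + s2 t2) / (2 * s2 t2))
        ((-3 * d) / (2 * s2 t2)) t0 :=
      ((((hs0d.hasDerivAt.const_mul (-3 : ℂ)).sub_const (s1 t1)).add_const (s2 t2))).div_const _
    exact this.congr_of_eventuallyEq (Filter.Eventually.of_forall fun t => hσ2 t)
  have hs0sq : s0 t0 ^ 2 ≠ 0 := pow_ne_zero _ hn0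
  constructor
  · rw [hσ1d.deriv, hσ3 t0, hd0]
    field_simp
    linear_combination hcube
  · rw [hσ2d.deriv, hσ3 t0, hd0]
    field_simp
    linear_combination hcube
end

section
/- With s_i and σ_j as above (t_i^2 = s_i^3, σ1 = -(s0 - s1 - 3 s2)/(2 s2), σ2 = (-3 s0 - s1 + s2)/(2 s2), σ3 = -s0/s2), the following hold: ∂σ1/∂t1 = (σ3 - σ2 + σ1 - 1)/(3 t1), ∂σ2/∂t1 = -(σ3 - σ2 + σ1 - 1)/(3 t1), and ∂σ3/∂t1 = 0. -/
open Filter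

/-- Reduced Garnier equations in `t1`:
`∂σ1/∂t1 = (σ3 - σ2 + σ1 - 1)/(3 t1)`, `∂σ2/∂t1 = -(σ3 - σ2 + σ1 - 1)/(3 t1)`,
`∂σ3/∂t1 = 0`. Here the `σ_j` are viewed as functions of `t1`. -/
theorem stmt_10 (t0 t1 t2 : ℂ) (ht0 : t0 ≠ 0) (ht1 : t1 ≠ 0) (ht2 : t2 ≠ 0)
    (s0 s1 s2 : ℂ → ℂ)
    (hs0d : DifferentiableAt ℂ s0 t0) (hs1d : DifferentiableAt ℂ s1 t1)
    (hs2d : DifferentiableAt ℂ s2 t2)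
    (hs0 : ∀ᶠ t in nhds t0, (s0 t) ^ 3 = t ^ 2)
    (hs1 : ∀ᶠ t in nhds t1, (s1 t) ^ 3 = t ^ 2)
    (hs2 : ∀ᶠ t in nhds t2, (s2 t) ^ 3 = t ^ 2)
    (hn0 : s0 t0 ≠ 0) (hn1 : s1 t1 ≠ 0) (hn2 : s2 t2 ≠ 0)
    (σ1 σ2 σ3 : ℂ → ℂ)
    (hσ1 : ∀ t, σ1 t = -(s0 t0 - s1 t - 3 * s2 t2) / (2 * s2 t2))
    (hσ2 : ∀ t, σ2 t = (-3 * s0 t0 - s1 t + s2 t2) / (2 * s2 t2))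
    (hσ3 : ∀ t, σ3 t = -(s0 t0) / s2 t2) :
    deriv σ1 t1 = (σ3 t1 - σ2 t1 + σ1 t1 - 1) / (3 * t1) ∧
    deriv σ2 t1 = -(σ3 t1 - σ2 t1 + σ1 t1 - 1) / (3 * t1) ∧
    deriv σ3 t1 = 0 := by
  set a := s0 t0 with ha
  set c := s2 t2 with hc
  have Hs1 : HasDerivAt s1 (deriv s1 t1) t1 := hs1d.hasDerivAt
  set D := deriv s1 t1 with hDdef
  have hb3 : s1 t1 ^ 3 = t1 ^ 2 := hs1.self_of_nhds
  have key : (3 : ℂ) * s1 t1 ^ 2 * D = 2 * t1 := by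
    have h1 : deriv (fun t => s1 t ^ 3) t1 = deriv (fun t : ℂ => t ^ 2) t1 :=
      Filter.EventuallyEq.deriv_eq hs1
    have h2 : deriv (fun t => s1 t ^ 3) t1 = 3 * s1 t1 ^ 2 * D := by
      have := (show HasDerivAt (fun t => s1 t ^ 3) _ t1 from Hs1.pow 3).deriv
      rw [this]; norm_num
    have h3 : deriv (fun t : ℂ => t ^ 2) t1 = 2 * t1 := by
      simp
    rw [h2, h3] at h1
    exact h1
  have hD : D = 2 * s1 t1 / (3 * t1) := by
    have hb2 : s1 t1 ^ 2 ≠ 0 := pow_ne_zero _ hn1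
    rw [eq_div_iff (mul_ne_zero three_ne_zero ht1)]
    have h5 : s1 t1 ^ 2 * (D * (3 * t1)) = s1 t1 ^ 2 * (2 * s1 t1) := by
      linear_combination t1 * key - 2 * hb3
    exact mul_left_cancel₀ hb2 h5
  -- derivative of σ1
  have H1 : HasDerivAt σ1 (D / (2 * c)) t1 := by
    have hfun : σ1 = fun t => -(a - s1 t - 3 * c) / (2 * c) := funext hσ1
    rw [hfun]
    have : HasDerivAt (fun t => a - s1 t - 3 * c) (-D) t1 := by
      simpa using (((hasDerivAt_const t1 a).sub Hs1).sub_const (3 * c))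
    simpa [neg_div, neg_neg] using (this.neg.div_const (2 * c))
  have H2 : HasDerivAt σ2 (-D / (2 * c)) t1 := by
    have hfun : σ2 = fun t => (-3 * a - s1 t + c) / (2 * c) := funext hσ2
    rw [hfun]
    have : HasDerivAt (fun t => -3 * a - s1 t + c) (-D) t1 := by
      simpa using (((hasDerivAt_const t1 (-3 * a)).sub Hs1).add_const c)
    simpa [neg_div] using (this.div_const (2 * c))
  have H3 : deriv σ3 t1 = 0 := by
    have hfun : σ3 = fun _ => -a / c := funext hσ3
    rw [hfun]
    simp
  have hR : -a / c - (-3 * a - s1 t1 + c) / (2 * c) + -(a - s1 t1 - 3 * c) / (2 * c) - 1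
      = s1 t1 / c := by
    field_simp
    ring
  refine ⟨?_, ?_, H3⟩
  · rw [H1.deriv, hσ1, hσ2, hσ3, hD, hR]
    field_simp
  · rw [H2.deriv, hσ1, hσ2, hσ3, hD, hR]
    field_simp
end

section
/- Consider the nonautonomous system of ODE-flows on ℂ^3 given by the vector fields X0: (σ1, σ2, σ3) ↦ (σ3/(3 t0), σ3/t0, 2 σ3/(3 t0)), X1: (σ1, σ2, σ3) ↦ ((σ3 - σ2 + σ1 - 1)/(3 t1), -(σ3 - σ2 + σ1 - 1)/(3 t1), 0), and X2: (σ1, σ2, σ3) ↦ (-(2 σ1 - 3)/(3 t2), -(2 σ2 - 1)/(3 t2), -2 σ3/(3 t2)). Then this Pfaffian system is completely integrable: for all i ≠ j the equality ∂_{t_j}(X_i) + (X_j · ∇)(X_i) = ∂_{t_i}(X_j) + (X_i · ∇)(X_j) holds identically in (σ1, σ2, σ3, t0, t1, t2) with t0, t1, t2 nonzero. -/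
open ContinuousLinearMap in
lemma aux_lin (a b c d : ℂ) (σ : ℂ × ℂ × ℂ) :
    HasFDerivAt (fun p : ℂ × ℂ × ℂ => a * p.1 + b * p.2.1 + c * p.2.2 + d)
      (a • fst ℂ ℂ (ℂ × ℂ) + b • ((fst ℂ ℂ ℂ).comp (snd ℂ ℂ (ℂ × ℂ)))
        + c • ((snd ℂ ℂ ℂ).comp (snd ℂ ℂ (ℂ × ℂ)))) σ := by
  have h1 : HasFDerivAt (fun p : ℂ × ℂ × ℂ => p.1) (fst ℂ ℂ (ℂ × ℂ)) σ := hasFDerivAt_fst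
  have h2 : HasFDerivAt (fun p : ℂ × ℂ × ℂ => p.2.1)
      ((fst ℂ ℂ ℂ).comp (snd ℂ ℂ (ℂ × ℂ))) σ := hasFDerivAt_fst.comp σ hasFDerivAt_snd
  have h3 : HasFDerivAt (fun p : ℂ × ℂ × ℂ => p.2.2)
      ((snd ℂ ℂ ℂ).comp (snd ℂ ℂ (ℂ × ℂ))) σ := hasFDerivAt_snd.comp σ hasFDerivAt_snd
  exact (((h1.const_mul a).add (h2.const_mul b)).add (h3.const_mul c)).add_const d

lemma aux_fderiv (f : (ℂ × ℂ × ℂ) → (ℂ × ℂ × ℂ))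
    (a1 b1 c1 d1 a2 b2 c2 d2 a3 b3 c3 d3 : ℂ)
    (hf : f = fun p => (a1 * p.1 + b1 * p.2.1 + c1 * p.2.2 + d1,
      a2 * p.1 + b2 * p.2.1 + c2 * p.2.2 + d2,
      a3 * p.1 + b3 * p.2.1 + c3 * p.2.2 + d3)) (σ v : ℂ × ℂ × ℂ) :
    fderiv ℂ f σ v = (a1 * v.1 + b1 * v.2.1 + c1 * v.2.2,
      a2 * v.1 + b2 * v.2.1 + c2 * v.2.2, a3 * v.1 + b3 * v.2.1 + c3 * v.2.2) := by
  subst hf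
  have h := ((aux_lin a1 b1 c1 d1 σ).prodMk ((aux_lin a2 b2 c2 d2 σ).prodMk (aux_lin a3 b3 c3 d3 σ)))
  rw [h.fderiv]
  simp [ContinuousLinearMap.prod_apply]

set_option maxHeartbeats 1600000 in
/-- Frobenius integrability of the reduced Pfaffian system: for `i ≠ j`,
`∂_{t_j}(X_i) + (X_j·∇)(X_i) = ∂_{t_i}(X_j) + (X_i·∇)(X_j)`. -/
theorem stmt_12 (X : Fin 3 → (Fin 3 → ℂ) → (ℂ × ℂ × ℂ) → (ℂ × ℂ × ℂ))
    (hX0 : ∀ (t : Fin 3 → ℂ) (σ : ℂ × ℂ × ℂ),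
      X 0 t σ = (σ.2.2 / (3 * t 0), σ.2.2 / t 0, 2 * σ.2.2 / (3 * t 0)))
    (hX1 : ∀ (t : Fin 3 → ℂ) (σ : ℂ × ℂ × ℂ),
      X 1 t σ = ((σ.2.2 - σ.2.1 + σ.1 - 1) / (3 * t 1),
        -(σ.2.2 - σ.2.1 + σ.1 - 1) / (3 * t 1), 0))
    (hX2 : ∀ (t : Fin 3 → ℂ) (σ : ℂ × ℂ × ℂ),
      X 2 t σ = (-(2 * σ.1 - 3) / (3 * t 2), -(2 * σ.2.1 - 1) / (3 * t 2),
        -(2 * σ.2.2) / (3 * t 2))) :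
    ∀ (t : Fin 3 → ℂ), (∀ k, t k ≠ 0) → ∀ (σ : ℂ × ℂ × ℂ) (i j : Fin 3), i ≠ j →
      deriv (fun u => X i (Function.update t j u) σ) (t j)
        + fderiv ℂ (X i t) σ (X j t σ)
      = deriv (fun u => X j (Function.update t i u) σ) (t i)
        + fderiv ℂ (X j t) σ (X i t σ) := by
  intro t ht σ i j hij
  have e0 : X 0 t = fun p : ℂ × ℂ × ℂ =>
      (0 * p.1 + 0 * p.2.1 + (3 * t 0)⁻¹ * p.2.2 + 0,
       0 * p.1 + 0 * p.2.1 + (t 0)⁻¹ * p.2.2 + 0,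
       0 * p.1 + 0 * p.2.1 + (2 / (3 * t 0)) * p.2.2 + 0) := by
    funext p; rw [hX0]
    simp only [Prod.mk.injEq]; refine ⟨by ring, by ring, by ring⟩
  have e1 : X 1 t = fun p : ℂ × ℂ × ℂ =>
      ((3 * t 1)⁻¹ * p.1 + (-(3 * t 1)⁻¹) * p.2.1 + (3 * t 1)⁻¹ * p.2.2 + (-(3 * t 1)⁻¹),
       (-(3 * t 1)⁻¹) * p.1 + (3 * t 1)⁻¹ * p.2.1 + (-(3 * t 1)⁻¹) * p.2.2 + (3 * t 1)⁻¹,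
       0 * p.1 + 0 * p.2.1 + 0 * p.2.2 + 0) := by
    funext p; rw [hX1]
    simp only [Prod.mk.injEq]; refine ⟨by ring, by ring, by ring⟩
  have e2 : X 2 t = fun p : ℂ × ℂ × ℂ =>
      ((-(2 / (3 * t 2))) * p.1 + 0 * p.2.1 + 0 * p.2.2 + (t 2)⁻¹,
       0 * p.1 + (-(2 / (3 * t 2))) * p.2.1 + 0 * p.2.2 + (3 * t 2)⁻¹,
       0 * p.1 + 0 * p.2.1 + (-(2 / (3 * t 2))) * p.2.2 + 0) := by
    funext p; rw [hX2]
    simp only [Prod.mk.injEq]; refine ⟨by ring, by ring, by ring⟩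
  have dz : ∀ i j : Fin 3, i ≠ j →
      deriv (fun u => X i (Function.update t j u) σ) (t j) = 0 := by
    intro i j hij
    have hc : i = 0 ∨ i = 1 ∨ i = 2 := by omega
    rcases hc with rfl | rfl | rfl
    · have h : (fun u => X 0 (Function.update t j u) σ) = fun _ => X 0 t σ := by
        funext u; rw [hX0, hX0, Function.update_of_ne hij]
      rw [h, deriv_const]
    · have h : (fun u => X 1 (Function.update t j u) σ) = fun _ => X 1 t σ := by
        funext u; rw [hX1, hX1, Function.update_of_ne hij]
      rw [h, deriv_const]
    · have h : (fun u => X 2 (Function.update t j u) σ) = fun _ => X 2 t σ := by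
        funext u; rw [hX2, hX2, Function.update_of_ne hij]
      rw [h, deriv_const]
  have h0 := ht 0; have h1 := ht 1; have h2 := ht 2
  have hci : i = 0 ∨ i = 1 ∨ i = 2 := by omega
  have hcj : j = 0 ∨ j = 1 ∨ j = 2 := by omega
  rcases hci with rfl | rfl | rfl <;> rcases hcj with rfl | rfl | rfl <;>
    first
    | exact absurd rfl hij
    | (rw [dz _ _ hij, dz _ _ (Ne.symm hij), zero_add, zero_add]
       rw [aux_fderiv _ _ _ _ _ _ _ _ _ _ _ _ _ e0, aux_fderiv _ _ _ _ _ _ _ _ _ _ _ _ _ e1,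
         hX0 t σ, hX1 t σ]
       simp only [Prod.mk.injEq]
       refine ⟨by field_simp [h0, h1, h2] <;> first | ring1 | tauto | (left; ring1), by field_simp [h0, h1, h2] <;> first | ring1 | tauto | (left; ring1), by field_simp [h0, h1, h2] <;> first | ring1 | tauto | (left; ring1)⟩)
    | (rw [dz _ _ hij, dz _ _ (Ne.symm hij), zero_add, zero_add]
       rw [aux_fderiv _ _ _ _ _ _ _ _ _ _ _ _ _ e0, aux_fderiv _ _ _ _ _ _ _ _ _ _ _ _ _ e2,
         hX0 t σ, hX2 t σ]
       simp only [Prod.mk.injEq]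
       refine ⟨by field_simp [h0, h1, h2] <;> first | ring1 | tauto | (left; ring1), by field_simp [h0, h1, h2] <;> first | ring1 | tauto | (left; ring1), by field_simp [h0, h1, h2] <;> first | ring1 | tauto | (left; ring1)⟩)
    | (rw [dz _ _ hij, dz _ _ (Ne.symm hij), zero_add, zero_add]
       rw [aux_fderiv _ _ _ _ _ _ _ _ _ _ _ _ _ e1, aux_fderiv _ _ _ _ _ _ _ _ _ _ _ _ _ e2,
         hX1 t σ, hX2 t σ]
       simp only [Prod.mk.injEq]
       refine ⟨by field_simp [h0, h1, h2] <;> first | ring1 | tauto | (left; ring1), by field_simp [h0, h1, h2] <;> first | ring1 | tauto | (left; ring1), by field_simp [h0, h1, h2] <;> first | ring1 | tauto | (left; ring1)⟩)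
end
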